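/- arXiv:1709.08324 — 3 statements merged into one kernel-verified Lean document; each statement's English description precedes it below -/
import Mathlib

section
/- For every n ∈ ℕ and parameters p, q, the function y(x) = M_n^{(p,q)}(x) satisfies the second-order differential equation x(x+1) y″(x) + [(2−p)x + (1+q)] y′(x) − n(n+1−p) y(x) = 0 for all x. -/
open MeasureTheory

/-- Pochhammer symbol `(a)_n = a (a+1) ⋯ (a+n−1)`. -/
noncomputable def poch (a : ℂ) (n : ℕ) : ℂ := ∏ i ∈ Finset.range n, (a + i)

/-- Generalized hypergeometric function `ₚF_q(a₁,…,a_p; c₁,…,c_q; x)`. -/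
noncomputable def genHyp (as cs : List ℂ) (x : ℂ) : ℂ :=
  ∑' k : ℕ, ((as.map (fun a => poch a k)).prod / (cs.map (fun c => poch c k)).prod)
    * x ^ k / (Nat.factorial k)

/-- Appell's double hypergeometric function `F₃(a,a′,b,b′;c;x,y)`. -/
noncomputable def appellF3 (a a' b b' c x y : ℂ) : ℂ :=
  ∑' mn : ℕ × ℕ, poch a mn.1 * poch a' mn.2 * poch b mn.1 * poch b' mn.2 /
    (poch c (mn.1 + mn.2) * (Nat.factorial mn.1) * (Nat.factorial mn.2)) * x ^ mn.1 * y ^ mn.2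

/-- Generalized binomial coefficient `binom(a,k) = a(a−1)⋯(a−k+1)/k!`. -/
noncomputable def gbinom (a : ℂ) (k : ℕ) : ℂ := (∏ i ∈ Finset.range k, (a - i)) / (Nat.factorial k)

/-- Jacobi type orthogonal polynomial `M_n^{(p,q)}(x)`. -/
noncomputable def jacobiM (n : ℕ) (p q x : ℂ) : ℂ :=
  (-1) ^ n * (Nat.factorial n) * ∑ k ∈ Finset.range (n + 1),
    gbinom (p - n - 1) k * gbinom (q + n) (n - k) * (-x) ^ k

/-- Left-sided Marichev–Saigo–Maeda fractional integral operator. -/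
noncomputable def msmLeft (δ δ' μ μ' ε : ℂ) (f : ℝ → ℂ) (x : ℝ) : ℂ :=
  (x : ℂ) ^ (-δ) / Complex.Gamma ε *
    ∫ t in Set.Ioo (0 : ℝ) x, ((x - t : ℝ) : ℂ) ^ (ε - 1) * (t : ℂ) ^ (-δ') *
      appellF3 δ δ' μ μ' ε ((1 - t / x : ℝ) : ℂ) ((1 - x / t : ℝ) : ℂ) * f t

/-- Right-sided Marichev–Saigo–Maeda fractional integral operator. -/
noncomputable def msmRight (δ δ' μ μ' ε : ℂ) (f : ℝ → ℂ) (x : ℝ) : ℂ :=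
  (x : ℂ) ^ (-δ') / Complex.Gamma ε *
    ∫ t in Set.Ioi x, ((t - x : ℝ) : ℂ) ^ (ε - 1) * (t : ℂ) ^ (-δ) *
      appellF3 δ δ' μ μ' ε ((1 - t / x : ℝ) : ℂ) ((1 - x / t : ℝ) : ℂ) * f t

/-- Left-sided Saigo fractional integral operator. -/
noncomputable def saigoLeft (δ μ ε : ℂ) (f : ℝ → ℂ) (x : ℝ) : ℂ :=
  (x : ℂ) ^ (-δ - μ) / Complex.Gamma δ *
    ∫ t in Set.Ioo (0 : ℝ) x, ((x - t : ℝ) : ℂ) ^ (δ - 1) *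
      genHyp [δ + μ, -ε] [δ] ((1 - t / x : ℝ) : ℂ) * f t

/-- Right-sided Saigo fractional integral operator. -/
noncomputable def saigoRight (δ μ ε : ℂ) (f : ℝ → ℂ) (x : ℝ) : ℂ :=
  (1 / Complex.Gamma δ) *
    ∫ t in Set.Ioi x, ((t - x : ℝ) : ℂ) ^ (δ - 1) * (t : ℂ) ^ (-δ - μ) *
      genHyp [δ + μ, -ε] [δ] ((1 - x / t : ℝ) : ℂ) * f t

/-- Left-sided Riemann–Liouville fractional integral operator. -/
noncomputable def rlLeft (δ : ℂ) (f : ℝ → ℂ) (x : ℝ) : ℂ :=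
  (1 / Complex.Gamma δ) * ∫ t in Set.Ioo (0 : ℝ) x, ((x - t : ℝ) : ℂ) ^ (δ - 1) * f t

/-- Right-sided Riemann–Liouville fractional integral operator. -/
noncomputable def rlRight (δ : ℂ) (f : ℝ → ℂ) (x : ℝ) : ℂ :=
  (1 / Complex.Gamma δ) * ∫ t in Set.Ioi x, ((t - x : ℝ) : ℂ) ^ (δ - 1) * f t

/-- Left-sided Erdélyi–Kober fractional integral operator `I⁺_{ε,δ}`. -/
noncomputable def ekLeft (ε δ : ℂ) (f : ℝ → ℂ) (x : ℝ) : ℂ :=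
  (x : ℂ) ^ (-δ - ε) / Complex.Gamma δ *
    ∫ t in Set.Ioo (0 : ℝ) x, ((x - t : ℝ) : ℂ) ^ (δ - 1) * (t : ℂ) ^ ε * f t

/-- Right-sided Erdélyi–Kober fractional integral operator `K⁻_{ε,δ}`. -/
noncomputable def ekRight (ε δ : ℂ) (f : ℝ → ℂ) (x : ℝ) : ℂ :=
  (x : ℂ) ^ ε / Complex.Gamma δ *
    ∫ t in Set.Ioi x, ((t - x : ℝ) : ℂ) ^ (δ - 1) * (t : ℂ) ^ (-δ - ε) * f t

/-- Left-sided Marichev–Saigo–Maeda fractional derivative operator. -/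
noncomputable def msmDLeft (δ δ' μ μ' ε : ℂ) (f : ℝ → ℂ) (x : ℝ) : ℂ :=
  iteratedDeriv (⌊ε.re⌋ + 1).toNat
    (msmLeft (-δ') (-δ) (-μ' + ((⌊ε.re⌋ + 1 : ℤ) : ℂ)) (-μ) (-ε + ((⌊ε.re⌋ + 1 : ℤ) : ℂ)) f) x

/-- Right-sided Marichev–Saigo–Maeda fractional derivative operator. -/
noncomputable def msmDRight (δ δ' μ μ' ε : ℂ) (f : ℝ → ℂ) (x : ℝ) : ℂ :=
  (-1 : ℂ) ^ (⌊ε.re⌋ + 1).toNat * iteratedDeriv (⌊ε.re⌋ + 1).toNat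
    (msmRight (-δ') (-δ) (-μ') (-μ + ((⌊ε.re⌋ + 1 : ℤ) : ℂ)) (-ε + ((⌊ε.re⌋ + 1 : ℤ) : ℂ)) f) x
lemma gbinom_succ (a : ℂ) (k : ℕ) : ((k:ℂ)+1) * gbinom a (k+1) = (a - k) * gbinom a k := by
  have h1 : ((Nat.factorial k : ℕ) : ℂ) ≠ 0 := Nat.cast_ne_zero.mpr (Nat.factorial_ne_zero k)
  have h2 : ((k:ℂ)+1) ≠ 0 := Nat.cast_add_one_ne_zero k
  simp only [gbinom, Finset.prod_range_succ, Nat.factorial_succ]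
  push_cast
  field_simp

lemma deriv_poly_sum (N : ℕ) (c : ℕ → ℂ) (x : ℂ) :
    deriv (fun y => ∑ k ∈ Finset.range (N+1), c k * y ^ k) x
      = ∑ k ∈ Finset.range N, ((k:ℂ)+1) * c (k+1) * x ^ k := by
  have h : HasDerivAt (fun y => ∑ k ∈ Finset.range (N+1), c k * y ^ k)
      (∑ k ∈ Finset.range (N+1), c k * ((k:ℂ) * x ^ (k-1))) x := by
    apply HasDerivAt.fun_sum
    intro k _
    exact (hasDerivAt_pow k x).const_mul (c k)
  rw [h.deriv, Finset.sum_range_succ']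
  simp only [Nat.cast_zero, zero_mul, mul_zero, add_zero, Nat.add_sub_cancel]
  refine Finset.sum_congr rfl fun k _ => ?_
  push_cast
  ring

lemma key_aux (p q : ℂ) (k m : ℕ) :
    ((k:ℂ)+1)*((k:ℂ)+q+1) * ((-1:ℂ)^(k+1) * gbinom (p - ((k:ℂ)+1+(m:ℂ)) - 1) (k+1) * gbinom (q + ((k:ℂ)+1+(m:ℂ))) m)
    + ((k:ℂ)-((k:ℂ)+1+(m:ℂ)))*((k:ℂ)+((k:ℂ)+1+(m:ℂ))+1-p) * ((-1:ℂ)^k * gbinom (p - ((k:ℂ)+1+(m:ℂ)) - 1) k * gbinom (q + ((k:ℂ)+1+(m:ℂ))) (m+1)) = 0 := by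
  have h1 := gbinom_succ (p - ((k:ℂ)+1+(m:ℂ)) - 1) k
  have h2 := gbinom_succ (q + ((k:ℂ)+1+(m:ℂ))) m
  linear_combination ((-1:ℂ))^(k+1)*((k:ℂ)+q+1)* gbinom (q + ((k:ℂ)+1+(m:ℂ))) m * h1
    - (-1:ℂ)^k*((k:ℂ)+((k:ℂ)+1+(m:ℂ))+1-p)* gbinom (p - ((k:ℂ)+1+(m:ℂ)) - 1) k * h2

lemma sum_up (N : ℕ) (g : ℕ → ℂ) (h0 : g 0 = 0) :
    ∑ k ∈ Finset.range (N+1), g k = ∑ k ∈ Finset.range N, g (k+1) := by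
  rw [Finset.sum_range_succ', h0, add_zero]

/-- The Jacobi type polynomial satisfies a second-order differential equation. -/
theorem jacobiM_ode (n : ℕ) (p q : ℂ) (x : ℂ) :
    x * (x + 1) * iteratedDeriv 2 (jacobiM n p q) x +
      ((2 - p) * x + (1 + q)) * deriv (jacobiM n p q) x -
      (n : ℂ) * ((n : ℂ) + 1 - p) * jacobiM n p q x = 0 := by
  classical
  set b : ℕ → ℂ := fun k => if k ≤ n then
      (-1)^n * (Nat.factorial n : ℂ) * ((-1:ℂ)^k * gbinom (p - n - 1) k * gbinom (q + n) (n - k))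
    else 0 with hbdef
  have hb0 : ∀ k, n < k → b k = 0 := fun k hk => if_neg (by omega)
  have key : ∀ k, k < n → ((k:ℂ)+1)*((k:ℂ)+q+1) * b (k+1)
      + ((k:ℂ)-(n:ℂ))*((k:ℂ)+(n:ℂ)+1-p) * b k = 0 := by
    intro k hk
    obtain ⟨m, hm⟩ : ∃ m, n = k+1+m := ⟨n-(k+1), by omega⟩
    have hnk1 : n - (k+1) = m := by omega
    have hnk : n - k = m+1 := by omega
    have hcast : (n:ℂ) = (k:ℂ)+1+(m:ℂ) := by rw [hm]; push_cast; ring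
    simp only [hbdef]
    rw [if_pos (show k+1 ≤ n by omega), if_pos (show k ≤ n by omega), hnk1, hnk, hcast]
    linear_combination ((-1:ℂ)^n * (Nat.factorial n : ℂ)) * key_aux p q k m
  have hf : jacobiM n p q = fun y => ∑ k ∈ Finset.range (n+3), b k * y ^ k := by
    funext y
    rw [show n+3 = (n+1)+1+1 from rfl, Finset.sum_range_succ, Finset.sum_range_succ,
      hb0 (n+1) (by omega), hb0 (n+1+1) (by omega)]
    simp only [zero_mul, add_zero]
    rw [jacobiM, Finset.mul_sum]
    refine Finset.sum_congr rfl fun k hk => ?_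
    have hkn : k ≤ n := by simpa [Nat.lt_succ_iff] using Finset.mem_range.mp hk
    simp only [hbdef, if_pos hkn]
    rw [neg_pow y k]
    ring
  have hd1 : deriv (jacobiM n p q) = fun y => ∑ k ∈ Finset.range (n+2), ((k:ℂ)+1) * b (k+1) * y ^ k := by
    funext y
    rw [hf]
    exact deriv_poly_sum (n+2) b y
  have hd2 : iteratedDeriv 2 (jacobiM n p q) x
      = ∑ k ∈ Finset.range (n+1), ((k:ℂ)+1) * (((k:ℂ)+2) * b (k+2)) * x ^ k := by
    rw [show (2:ℕ) = 1+1 from rfl, iteratedDeriv_succ, iteratedDeriv_one, hd1,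
      deriv_poly_sum (n+1) (fun k => ((k:ℂ)+1) * b (k+1)) x]
    refine Finset.sum_congr rfl fun k _ => ?_
    push_cast
    ring
  rw [hd2, hd1, hf]
  beta_reduce
  have hx2A : ∑ k ∈ Finset.range (n+3), (k:ℂ)*((k:ℂ)-1) * b k * x ^ k
      = x * (x * ∑ k ∈ Finset.range (n+1), ((k:ℂ)+1) * (((k:ℂ)+2) * b (k+2)) * x ^ k) := by
    rw [show n+3 = (n+2)+1 from rfl,
      sum_up (n+2) (fun k => (k:ℂ)*((k:ℂ)-1) * b k * x ^ k) (by simp),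
      sum_up (n+1) (fun k => ((k+1:ℕ):ℂ)*(((k+1:ℕ):ℂ)-1) * b (k+1) * x ^ (k+1)) (by norm_num),
      Finset.mul_sum, Finset.mul_sum]
    refine Finset.sum_congr rfl fun k _ => ?_
    push_cast
    ring
  have hxA : ∑ k ∈ Finset.range (n+2), (k:ℂ)*((k:ℂ)+1) * b (k+1) * x ^ k
      = x * ∑ k ∈ Finset.range (n+1), ((k:ℂ)+1) * (((k:ℂ)+2) * b (k+2)) * x ^ k := by
    rw [sum_up (n+1) (fun k => (k:ℂ)*((k:ℂ)+1) * b (k+1) * x ^ k) (by simp),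
      Finset.mul_sum]
    refine Finset.sum_congr rfl fun k _ => ?_
    push_cast
    ring
  have hxB : ∑ k ∈ Finset.range (n+3), (k:ℂ) * b k * x ^ k
      = x * ∑ k ∈ Finset.range (n+2), ((k:ℂ)+1) * b (k+1) * x ^ k := by
    rw [show n+3 = (n+2)+1 from rfl,
      sum_up (n+2) (fun k => (k:ℂ) * b k * x ^ k) (by simp),
      Finset.mul_sum]
    refine Finset.sum_congr rfl fun k _ => ?_
    push_cast
    ring
  have hzero : (∑ k ∈ Finset.range (n+3), (k:ℂ)*((k:ℂ)-1) * b k * x ^ k)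
      + (2-p) * (∑ k ∈ Finset.range (n+3), (k:ℂ) * b k * x ^ k)
      - (n:ℂ)*((n:ℂ)+1-p) * (∑ k ∈ Finset.range (n+3), b k * x ^ k)
      + ((∑ k ∈ Finset.range (n+2), (k:ℂ)*((k:ℂ)+1) * b (k+1) * x ^ k)
        + (1+q) * (∑ k ∈ Finset.range (n+2), ((k:ℂ)+1) * b (k+1) * x ^ k)) = 0 := by
    rw [show n+3 = (n+2)+1 from rfl]
    rw [Finset.sum_range_succ (fun k => (k:ℂ)*((k:ℂ)-1) * b k * x ^ k),
      Finset.sum_range_succ (fun k => (k:ℂ) * b k * x ^ k),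
      Finset.sum_range_succ (fun k => b k * x ^ k),
      hb0 (n+2) (by omega)]
    simp only [mul_zero, zero_mul, add_zero]
    rw [Finset.mul_sum, Finset.mul_sum, Finset.mul_sum, ← Finset.sum_add_distrib,
      ← Finset.sum_sub_distrib, ← Finset.sum_add_distrib, ← Finset.sum_add_distrib]
    refine Finset.sum_eq_zero fun k hk => ?_
    have hk2 : k < n + 2 := Finset.mem_range.mp hk
    rcases Nat.lt_or_ge k n with h | h
    · linear_combination x ^ k * key k h
    · obtain h1 | h1 : k = n ∨ k = n+1 := by omega
      · have e : (k:ℂ) = (n:ℂ) := by rw [h1]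
        rw [show k+1 = n+1 from by omega, hb0 (n+1) (by omega), e]; ring
      · rw [show k+1 = n+1+1 from by omega, hb0 (n+1+1) (by omega), hb0 k (by omega)]; ring
  linear_combination hzero - hx2A - hxA - (2-p) * hxB
end

section
/- Let n ∈ ℕ, let p, q be real parameters with q > −1, and let δ, τ ∈ ℂ with Re(δ) > 0 and Re(τ) > 0. Then for x > 0, the left-sided Riemann–Liouville fractional integral satisfies (I₀₊^{δ} t^{τ−1} M_n^{(p,q)}(t))(x) = (−1)^n Γ(1+q+n) Γ(τ) / [Γ(1+q) Γ(τ+δ)] · x^{τ+δ−1} · ₃F₂(1+n−p, −n, τ; 1+q, τ+δ; −x). -/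
open MeasureTheory

lemma poch_ne_zero {a : ℂ} (ha : 0 < a.re) (k : ℕ) : poch a k ≠ 0 := by
  rw [poch]
  refine Finset.prod_ne_zero_iff.mpr fun i _ h => ?_
  have h2 : (a + (i:ℂ)).re = 0 := by rw [h]; simp
  simp only [Complex.add_re, Complex.natCast_re] at h2
  have : (0:ℝ) ≤ (i:ℝ) := Nat.cast_nonneg i
  linarith

lemma poch_succ (a : ℂ) (k : ℕ) : poch a (k+1) = poch a k * (a + k) := by
  rw [poch, poch, Finset.prod_range_succ]

lemma poch_eq_zero_of_lt {n k : ℕ} (h : n < k) : poch (-(n:ℂ)) k = 0 := by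
  rw [poch]
  exact Finset.prod_eq_zero (Finset.mem_range.mpr h) (by simp)

lemma prod_sub_eq_poch (a : ℂ) (k : ℕ) :
    ∏ i ∈ Finset.range k, (a - i) = (-1)^k * poch (-a) k := by
  rw [poch]
  calc ∏ i ∈ Finset.range k, (a - i) = ∏ i ∈ Finset.range k, ((-1) * (-a + i)) :=
        Finset.prod_congr rfl fun i _ => by ring
    _ = (-1)^k * ∏ i ∈ Finset.range k, (-a + i) := by
        rw [Finset.prod_mul_distrib, Finset.prod_const, Finset.card_range]

lemma Gamma_add_nat {s : ℂ} (hs : 0 < s.re) (k : ℕ) :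
    Complex.Gamma (s + k) = poch s k * Complex.Gamma s := by
  induction k with
  | zero => simp [poch]
  | succ k ih =>
    have hk : s + (k:ℂ) ≠ 0 := by
      intro h
      have h2 : (s + (k:ℂ)).re = 0 := by rw [h]; simp
      simp only [Complex.add_re, Complex.natCast_re] at h2
      have : (0:ℝ) ≤ (k:ℝ) := Nat.cast_nonneg k
      linarith
    have heq : s + ((k+1 : ℕ):ℂ) = (s + k) + 1 := by push_cast; ring
    rw [heq, Complex.Gamma_add_one _ hk, ih, poch_succ]
    ring

lemma poch_neg_nat {n k : ℕ} (hk : k ≤ n) :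
    poch (-(n:ℂ)) k * ((n-k).factorial : ℂ) = (-1)^k * (n.factorial : ℂ) := by
  induction k with
  | zero => simp [poch]
  | succ k ih =>
    have hk' : k ≤ n := Nat.le_of_succ_le hk
    have h1 : n - k = (n - (k+1)) + 1 := by omega
    have h2 : ((n-k).factorial : ℂ) = ((n-k:ℕ):ℂ) * ((n-(k+1)).factorial : ℂ) := by
      rw [h1, Nat.factorial_succ]; push_cast [← h1]; ring
    have h3 : (-(n:ℂ) + k) = -((n-k:ℕ):ℂ) := by
      rw [Nat.cast_sub hk']; ring
    calc poch (-(n:ℂ)) (k+1) * ((n-(k+1)).factorial : ℂ)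
        = -(poch (-(n:ℂ)) k * (((n-k:ℕ):ℂ) * ((n-(k+1)).factorial:ℂ))) := by
          rw [poch_succ, h3]; ring
      _ = -(poch (-(n:ℂ)) k * ((n-k).factorial:ℂ)) := by rw [h2]
      _ = (-1)^(k+1) * (n.factorial:ℂ) := by rw [ih hk']; ring

lemma poch_split (a : ℂ) {k n : ℕ} (hk : k ≤ n) :
    poch a k * ∏ i ∈ Finset.range (n - k), (a + (n:ℂ) - 1 - i) = poch a n := by
  have h1 : ∏ i ∈ Finset.range (n-k), (a + (n:ℂ) - 1 - i)
      = ∏ j ∈ Finset.range (n-k), (a + ((k + j : ℕ):ℂ)) := by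
    rw [← Finset.prod_range_reflect (fun j => a + ((k + j : ℕ):ℂ)) (n-k)]
    refine Finset.prod_congr rfl fun i hi => ?_
    rw [Finset.mem_range] at hi
    have hki : k + (n - k - 1 - i) = n - 1 - i := by omega
    rw [hki, Nat.sub_sub, Nat.cast_sub (show 1+i ≤ n by omega)]
    push_cast; ring
  have h2 : k + (n - k) = n := by omega
  rw [h1, poch]
  conv_rhs => rw [poch, ← h2, Finset.prod_range_add]



lemma beta_integrable {u v : ℂ} (hu : 0 < u.re) (hv : 0 < v.re) {x : ℝ} (hx : 0 < x) :
    IntegrableOn (fun t : ℝ => ((x - t : ℝ):ℂ)^(u-1) * (t:ℂ)^(v-1)) (Set.Ioo 0 x) volume := by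
  have h0 := Complex.betaIntegral_convergent hv hu
  have h1 := h0.comp_mul_left (c := x⁻¹)
  rw [show (0:ℝ)/x⁻¹ = 0 by simp, show (1:ℝ)/x⁻¹ = x by field_simp] at h1
  have h2 := (h1.const_mul ((x:ℂ)^(u-1) * (x:ℂ)^(v-1)))
  rw [intervalIntegrable_iff_integrableOn_Ioo_of_le hx.le] at h2
  refine h2.congr_fun (fun t ht => ?_) measurableSet_Ioo
  obtain ⟨ht0, htx⟩ := ht
  have hx' : (x:ℂ) ≠ 0 := Complex.ofReal_ne_zero.mpr hx.ne'
  have e1 : (t:ℂ)^(v-1) = (x:ℂ)^(v-1) * ((x⁻¹*t : ℝ):ℂ)^(v-1) := by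
    rw [← Complex.mul_cpow_ofReal_nonneg hx.le (by positivity)]
    congr 2
    push_cast
    field_simp [hx']
  have e2 : ((x - t : ℝ):ℂ)^(u-1) = (x:ℂ)^(u-1) * ((1 - x⁻¹*t : ℝ):ℂ)^(u-1) := by
    rw [← Complex.mul_cpow_ofReal_nonneg hx.le
      (by rw [inv_mul_eq_div]; nlinarith [(div_lt_one hx).mpr htx])]
    congr 2
    push_cast
    field_simp [hx']
  have e3 : (1 - ((x⁻¹*t : ℝ):ℂ)) = ((1 - x⁻¹*t : ℝ):ℂ) := by push_cast; ring
  beta_reduce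
  rw [e3]
  rw [e1, e2]; ring

lemma beta_eval {u v : ℂ} (hu : 0 < u.re) (hv : 0 < v.re) {x : ℝ} (hx : 0 < x) :
    ∫ t in Set.Ioo (0:ℝ) x, ((x - t : ℝ):ℂ)^(u-1) * (t:ℂ)^(v-1)
      = Complex.Gamma u * Complex.Gamma v / Complex.Gamma (u+v) * (x:ℂ)^(u+v-1) := by
  have h1 : ∫ t in Set.Ioo (0:ℝ) x, ((x - t : ℝ):ℂ)^(u-1) * (t:ℂ)^(v-1)
      = ∫ t in (0:ℝ)..x, (t:ℂ)^(v-1) * ((x:ℂ) - t)^(u-1) := by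
    rw [intervalIntegral.integral_of_le hx.le, ← integral_Ioc_eq_integral_Ioo]
    refine setIntegral_congr_fun measurableSet_Ioc fun t _ => ?_
    push_cast
    ring
  rw [h1, Complex.betaIntegral_scaled v u hx, Complex.betaIntegral_symm]
  have h2 : Complex.Gamma u * Complex.Gamma v
      = Complex.Gamma (u+v) * Complex.betaIntegral u v :=
    Complex.Gamma_mul_Gamma_eq_betaIntegral hu hv
  have h3 : Complex.Gamma (u+v) ≠ 0 :=
    Complex.Gamma_ne_zero_of_re_pos (by simp [Complex.add_re]; positivity)
  rw [show v + u - 1 = u + v - 1 by ring, h2]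
  field_simp


set_option maxHeartbeats 2000000 in
theorem rlLeft_jacobiM' (n : ℕ) (p q : ℝ) (hq : -1 < q) (δ τ : ℂ)
    (hδ : 0 < δ.re) (hτ : 0 < τ.re) (x : ℝ) (hx : 0 < x) :
    rlLeft δ (fun t => (t : ℂ) ^ (τ - 1) * jacobiM n p q t) x =
      (-1) ^ n * Complex.Gamma (1 + (q : ℂ) + n) * Complex.Gamma τ /
        (Complex.Gamma (1 + (q : ℂ)) * Complex.Gamma (τ + δ)) *
        (x : ℂ) ^ (τ + δ - 1) *
        genHyp [1 + (n : ℂ) - p, -(n : ℂ), τ] [1 + (q : ℂ), τ + δ] (-(x : ℂ)) := by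
  have hxC : (x:ℂ) ≠ 0 := Complex.ofReal_ne_zero.mpr hx.ne'
  have hτδ : 0 < (τ+δ).re := by simp only [Complex.add_re]; positivity
  have hq1 : 0 < (1 + (q:ℂ)).re := by
    simp only [Complex.add_re, Complex.one_re, Complex.ofReal_re]; linarith
  have hΓδ := Complex.Gamma_ne_zero_of_re_pos hδ
  have hΓτδ := Complex.Gamma_ne_zero_of_re_pos hτδ
  have hΓq := Complex.Gamma_ne_zero_of_re_pos hq1
  have hτk : ∀ k : ℕ, 0 < (τ + (k:ℂ)).re := fun k => by
    simp only [Complex.add_re, Complex.natCast_re]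
    have : (0:ℝ) ≤ (k:ℝ) := Nat.cast_nonneg k
    linarith
  set c : ℕ → ℂ := fun k => (-1:ℂ)^n * (n.factorial : ℂ) * gbinom ((p:ℂ)-n-1) k
      * gbinom ((q:ℂ)+n) (n-k) * (-1:ℂ)^k with hc
  have hgen : genHyp [1 + (n : ℂ) - p, -(n : ℂ), τ] [1 + (q : ℂ), τ + δ] (-(x : ℂ))
      = ∑ k ∈ Finset.range (n+1),
        poch (1+(n:ℂ)-↑p) k * poch (-(n:ℂ)) k * poch τ k
          / (poch (1+(q:ℂ)) k * poch (τ+δ) k) * (-(x:ℂ))^k / (k.factorial : ℂ) := by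
    rw [genHyp]
    rw [tsum_eq_sum (s := Finset.range (n+1)) (fun k hk => by
      have hnk : n < k := by
        by_contra h
        exact hk (Finset.mem_range.mpr (by omega))
      simp [poch_eq_zero_of_lt hnk])]
    exact Finset.sum_congr rfl fun k _ => by
      simp only [List.map_cons, List.map_nil, List.prod_cons, List.prod_nil, mul_one]
      ring
  rw [rlLeft]
  have hcong : ∀ t ∈ Set.Ioo (0:ℝ) x,
      ((x - t : ℝ):ℂ)^(δ-1) * ((fun t : ℝ => (t:ℂ)^(τ-1) * jacobiM n p q t) t)
      = ∑ k ∈ Finset.range (n+1), c k * (((x - t : ℝ):ℂ)^(δ-1) * (t:ℂ)^(τ+(k:ℂ)-1)) := by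
    intro t ht
    have htne : (t:ℂ) ≠ 0 := Complex.ofReal_ne_zero.mpr ht.1.ne'
    simp only [jacobiM, Finset.mul_sum]
    refine Finset.sum_congr rfl fun k hk => ?_
    have h4 : (t:ℂ)^(τ-1) * (t:ℂ)^((k:ℕ):ℂ) = (t:ℂ)^(τ+(k:ℂ)-1) := by
      rw [← Complex.cpow_add _ _ htne]; congr 1; ring
    rw [neg_pow, ← h4, Complex.cpow_natCast]
    simp only [hc]
    ring
  rw [setIntegral_congr_fun measurableSet_Ioo hcong]
  rw [integral_finset_sum _ (fun k _ => ((beta_integrable hδ (hτk k) hx).const_mul (c k)))]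
  simp_rw [MeasureTheory.integral_const_mul]
  rw [hgen]
  simp only [Finset.mul_sum]
  refine Finset.sum_congr rfl fun k hk => ?_
  have hkn : k ≤ n := by
    have := Finset.mem_range.mp hk; omega
  rw [beta_eval hδ (hτk k) hx]
  -- cancel the Gamma δ factor
  have hA : ∀ cc B C D : ℂ, 1 / Complex.Gamma δ * (cc * (Complex.Gamma δ * B / C * D))
      = cc * (B / C * D) := fun cc B C D => by
    rw [mul_div_assoc (Complex.Gamma δ) B C, mul_assoc (Complex.Gamma δ) (B/C) D, one_div]
    calc (Complex.Gamma δ)⁻¹ * (cc * (Complex.Gamma δ * (B / C * D)))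
        = ((Complex.Gamma δ)⁻¹ * Complex.Gamma δ) * (cc * (B / C * D)) := by ring
      _ = cc * (B / C * D) := by rw [inv_mul_cancel₀ hΓδ, one_mul]
  rw [hA]
  -- rewrite gamma factors
  rw [Gamma_add_nat hτ k]
  rw [show δ + (τ + (k:ℂ)) = (τ + δ) + (k:ℂ) by ring, Gamma_add_nat hτδ k]
  rw [show τ + δ + (k:ℂ) - 1 = (τ + δ - 1) + (k:ℂ) by ring,
    Complex.cpow_add _ _ hxC, Complex.cpow_natCast]
  rw [Gamma_add_nat hq1 n]
  -- rewrite binomials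
  have hP1 : ∏ i ∈ Finset.range k, (((p:ℂ)-↑n-1) - ↑i) = (-1:ℂ)^k * poch (1+(n:ℂ)-↑p) k := by
    rw [prod_sub_eq_poch, show -((p:ℂ)-↑n-1) = 1+(n:ℂ)-↑p by ring]
  have hprodeq : ∏ i ∈ Finset.range (n-k), ((1+(q:ℂ)) + (n:ℂ) - 1 - ↑i)
      = ∏ i ∈ Finset.range (n-k), (((q:ℂ)+↑n) - ↑i) :=
    Finset.prod_congr rfl fun i _ => by ring
  have hsplit := poch_split (1+(q:ℂ)) hkn
  rw [hprodeq] at hsplit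
  have hP2 : ∏ i ∈ Finset.range (n-k), (((q:ℂ)+↑n) - ↑i)
      = poch (1+(q:ℂ)) n / poch (1+(q:ℂ)) k := by
    rw [eq_div_iff (poch_ne_zero hq1 k), mul_comm]
    exact hsplit
  have hP3 : poch (-(n:ℂ)) k = (-1:ℂ)^k * (n.factorial : ℂ) / (((n-k).factorial : ℕ) : ℂ) := by
    rw [eq_div_iff (by exact_mod_cast (Nat.factorial_ne_zero (n-k)))]
    exact poch_neg_nat hkn
  simp only [hc, gbinom, hP1, hP2, hP3]
  rw [neg_pow (x:ℂ) k]
  have hk1 : ((k.factorial : ℕ) : ℂ) ≠ 0 := by exact_mod_cast k.factorial_ne_zero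
  have hk2 : (((n-k).factorial : ℕ) : ℂ) ≠ 0 := by exact_mod_cast (n-k).factorial_ne_zero
  have hpq : poch (1+(q:ℂ)) k ≠ 0 := poch_ne_zero hq1 k
  have hpτδ : poch (τ+δ) k ≠ 0 := poch_ne_zero hτδ k
  field_simp [hΓq, hΓτδ, hpq, hpτδ, hk1, hk2]

/-- Corollary 2: Riemann–Liouville left-sided fractional integral of the Jacobi type
polynomial. -/
theorem rlLeft_jacobiM (n : ℕ) (p q : ℝ) (hq : -1 < q) (δ τ : ℂ)
    (hδ : 0 < δ.re) (hτ : 0 < τ.re) (x : ℝ) (hx : 0 < x) :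
    rlLeft δ (fun t => (t : ℂ) ^ (τ - 1) * jacobiM n p q t) x =
      (-1) ^ n * Complex.Gamma (1 + (q : ℂ) + n) * Complex.Gamma τ /
        (Complex.Gamma (1 + (q : ℂ)) * Complex.Gamma (τ + δ)) *
        (x : ℂ) ^ (τ + δ - 1) *
        genHyp [1 + (n : ℂ) - p, -(n : ℂ), τ] [1 + (q : ℂ), τ + δ] (-(x : ℂ)) := by
  exact rlLeft_jacobiM' n p q hq δ τ hδ hτ x hx
end

section
/- Let n ∈ ℕ, let p, q be real parameters with q > −1, and let δ, τ ∈ ℂ with Re(δ) > 0 and Re(δ) < 1 − Re(τ). Then for x > 0, the right-sided Riemann–Liouville fractional integral satisfies (I₋^{δ} t^{τ−1} M_n^{(p,q)}(1/t))(x) = (−1)^n Γ(1+q+n) Γ(1−δ−τ) / [Γ(1+q) Γ(1−τ)] · x^{τ+δ−1} · ₃F₂(1+n−p, −n, 1−δ−τ; 1+q, 1−τ; −1/x). -/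
open MeasureTheory

namespace RLAux
open Set Complex

lemma pointwise_aux (x : ℝ) (hx : 0 < x) (a c : ℂ) {s : ℝ} (hs : s ∈ Set.Ioo (0:ℝ) 1) :
    |(-x / s^2)| • ( ((x * s⁻¹ - x : ℝ):ℂ)^(a-1) * ((x * s⁻¹ : ℝ):ℂ)^c )
    = (x:ℂ)^(a+c) * (((s:ℝ):ℂ)^((-a-c)-1) * ((1-s:ℝ):ℂ)^(a-1)) := by
  obtain ⟨hs0, hs1⟩ := hs
  have hs0' : (0:ℝ) < 1 - s := by linarith
  have hxc : (x:ℂ) ≠ 0 := Complex.ofReal_ne_zero.mpr hx.ne'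
  have hsc : ((s:ℝ):ℂ) ≠ 0 := Complex.ofReal_ne_zero.mpr hs0.ne'
  have harg : ((s:ℝ):ℂ).arg ≠ Real.pi := by
    rw [Complex.arg_ofReal_of_nonneg hs0.le]
    exact fun h => Real.pi_ne_zero h.symm
  have h1 : (x * s⁻¹ - x : ℝ) = x * (1 - s) * s⁻¹ := by field_simp
  have h2 : ((x * (1 - s) * s⁻¹ : ℝ):ℂ)^(a-1)
      = (x:ℂ)^(a-1) * ((1-s:ℝ):ℂ)^(a-1) * ((s:ℝ):ℂ)^(-(a-1)) := by
    rw [Complex.ofReal_mul (x*(1-s)) s⁻¹,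
      mul_cpow_ofReal_nonneg (by positivity) (by positivity),
      Complex.ofReal_mul, mul_cpow_ofReal_nonneg hx.le hs0'.le,
      Complex.ofReal_inv, inv_cpow _ _ harg, ← Complex.cpow_neg]
  have h3 : ((x * s⁻¹ : ℝ):ℂ)^c = (x:ℂ)^c * ((s:ℝ):ℂ)^(-c) := by
    rw [Complex.ofReal_mul, mul_cpow_ofReal_nonneg hx.le (by positivity),
      Complex.ofReal_inv, inv_cpow _ _ harg, ← Complex.cpow_neg]
  have h4 : |(-x / s^2)| = x * s⁻¹ * s⁻¹ := by
    rw [abs_div, abs_neg, abs_of_pos hx, abs_of_pos (pow_pos hs0 2), sq, div_eq_mul_inv, mul_inv]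
    ring
  have hxpow : (x:ℂ)^(a+c) = (x:ℂ) * ((x:ℂ)^(a-1) * (x:ℂ)^c) := by
    rw [show a + c = 1 + ((a-1) + c) by ring, Complex.cpow_add _ _ hxc,
      Complex.cpow_add _ _ hxc, Complex.cpow_one]
  have hspow : ((s:ℝ):ℂ)^((-a-c)-1) = ((s:ℝ):ℂ)⁻¹ * (((s:ℝ):ℂ)⁻¹ *
      (((s:ℝ):ℂ)^(-(a-1)) * ((s:ℝ):ℂ)^(-c))) := by
    rw [show ((s:ℝ):ℂ)⁻¹ = ((s:ℝ):ℂ)^(-(1:ℂ)) by rw [Complex.cpow_neg, Complex.cpow_one],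
      ← Complex.cpow_add _ _ hsc, ← Complex.cpow_add _ _ hsc, ← Complex.cpow_add _ _ hsc]
    congr 1
    ring
  rw [h1, h2, h3, h4, Complex.real_smul, hxpow, hspow]
  push_cast
  ring


-- change of variables core
lemma cov_aux (x : ℝ) (hx : 0 < x) (g : ℝ → ℂ) :
    (∫ t in Set.Ioi x, g t) = ∫ s in Set.Ioo (0:ℝ) 1, |(-x / s^2)| • g (x * s⁻¹) := by
  have hderiv : ∀ s ∈ Set.Ioo (0:ℝ) 1, HasDerivWithinAt (fun s : ℝ => x * s⁻¹)
      (-x / s^2) (Set.Ioo (0:ℝ) 1) s := by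
    intro s hs
    have h := ((hasDerivAt_inv hs.1.ne').const_mul x).hasDerivWithinAt
        (s := Set.Ioo (0:ℝ) 1)
    convert h using 1
    exacts [rfl, rfl, by ring]
  have hinj : Set.InjOn (fun s : ℝ => x * s⁻¹) (Set.Ioo (0:ℝ) 1) := by
    intro s hs t ht h
    simp only at h
    have := mul_left_cancel₀ hx.ne' h
    exact inv_injective this
  have himg : (fun s : ℝ => x * s⁻¹) '' (Set.Ioo (0:ℝ) 1) = Set.Ioi x := by
    ext y
    constructor
    · rintro ⟨s, hs, rfl⟩
      have : 1 < s⁻¹ := (one_lt_inv₀ hs.1).mpr hs.2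
      simpa using (mul_lt_mul_of_pos_left this hx)
    · intro hy
      have hy' : x < y := hy
      have hy0 : 0 < y := hx.trans hy'
      refine ⟨x / y, ⟨div_pos hx hy0, (div_lt_one hy0).mpr hy'⟩, ?_⟩
      field_simp
  rw [← himg, integral_image_eq_integral_abs_deriv_smul measurableSet_Ioo hderiv hinj]

lemma cov_aux_int (x : ℝ) (hx : 0 < x) (g : ℝ → ℂ) :
    MeasureTheory.IntegrableOn g (Set.Ioi x) ↔
      MeasureTheory.IntegrableOn (fun s => |(-x / s^2)| • g (x * s⁻¹)) (Set.Ioo (0:ℝ) 1) := by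
  have hderiv : ∀ s ∈ Set.Ioo (0:ℝ) 1, HasDerivWithinAt (fun s : ℝ => x * s⁻¹)
      (-x / s^2) (Set.Ioo (0:ℝ) 1) s := by
    intro s hs
    have h := ((hasDerivAt_inv hs.1.ne').const_mul x).hasDerivWithinAt
        (s := Set.Ioo (0:ℝ) 1)
    convert h using 1
    exacts [rfl, rfl, by ring]
  have hinj : Set.InjOn (fun s : ℝ => x * s⁻¹) (Set.Ioo (0:ℝ) 1) := by
    intro s hs t ht h
    simp only at h
    exact inv_injective (mul_left_cancel₀ hx.ne' h)
  have himg : (fun s : ℝ => x * s⁻¹) '' (Set.Ioo (0:ℝ) 1) = Set.Ioi x := by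
    ext y
    constructor
    · rintro ⟨s, hs, rfl⟩
      have : 1 < s⁻¹ := (one_lt_inv₀ hs.1).mpr hs.2
      simpa using (mul_lt_mul_of_pos_left this hx)
    · intro hy
      have hy' : x < y := hy
      have hy0 : 0 < y := hx.trans hy'
      refine ⟨x / y, ⟨div_pos hx hy0, (div_lt_one hy0).mpr hy'⟩, ?_⟩
      field_simp
  rw [← himg]
  exact integrableOn_image_iff_integrableOn_abs_deriv_smul measurableSet_Ioo hderiv hinj g

lemma hbeta_aux (u v : ℂ) (hu : 0 < u.re) (hv : 0 < v.re) :
    ∫ s in Set.Ioo (0:ℝ) 1, (((s:ℝ):ℂ)^(u-1) * ((1-s:ℝ):ℂ)^(v-1))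
      = Complex.Gamma u * Complex.Gamma v / Complex.Gamma (u + v) := by
  have h := Complex.Gamma_mul_Gamma_eq_betaIntegral hu hv
  have hne : Complex.Gamma (u+v) ≠ 0 :=
    Complex.Gamma_ne_zero_of_re_pos (by simp [Complex.add_re]; positivity)
  have : Complex.betaIntegral u v = Complex.Gamma u * Complex.Gamma v / Complex.Gamma (u+v) := by
    rw [eq_div_iff hne, h]; ring
  rw [← this, Complex.betaIntegral, intervalIntegral.integral_of_le zero_le_one,
    MeasureTheory.integral_Ioc_eq_integral_Ioo]
  refine setIntegral_congr_fun measurableSet_Ioo fun s hs => ?_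
  norm_cast

lemma betaconv_Ioo (u v : ℂ) (hu : 0 < u.re) (hv : 0 < v.re) :
    MeasureTheory.IntegrableOn
      (fun s : ℝ => (((s:ℝ):ℂ)^(u-1) * ((1-s:ℝ):ℂ)^(v-1))) (Set.Ioo (0:ℝ) 1) := by
  have h := (Complex.betaIntegral_convergent hu hv)
  rw [intervalIntegrable_iff_integrableOn_Ioc_of_le zero_le_one] at h
  refine (h.mono_set Set.Ioo_subset_Ioc_self).congr_fun (fun s hs => ?_) measurableSet_Ioo
  norm_cast

lemma beta_Ioi (x : ℝ) (hx : 0 < x) (a c : ℂ) (ha : 0 < a.re) (hac : (a+c).re < 0) :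
    MeasureTheory.IntegrableOn (fun t : ℝ => ((t - x : ℝ):ℂ)^(a-1) * (t:ℂ)^c) (Set.Ioi x) ∧
    ∫ t in Set.Ioi x, ((t - x : ℝ):ℂ)^(a-1) * (t:ℂ)^c
      = (x:ℂ)^(a+c) * (Complex.Gamma a * Complex.Gamma (-a-c) / Complex.Gamma (-c)) := by
  set g : ℝ → ℂ := fun t : ℝ => ((t - x : ℝ):ℂ)^(a-1) * (t:ℂ)^c with hg
  have hu : 0 < (-a-c).re := by
    have : (-a-c).re = -((a+c).re) := by simp [Complex.add_re, Complex.sub_re, Complex.neg_re]; ring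
    rw [this]; linarith
  have hkey : ∀ s ∈ Set.Ioo (0:ℝ) 1, |(-x / s^2)| • g (x * s⁻¹)
      = (x:ℂ)^(a+c) * (((s:ℝ):ℂ)^((-a-c)-1) * ((1-s:ℝ):ℂ)^(a-1)) := fun s hs =>
    pointwise_aux x hx a c hs
  have hInt1 : MeasureTheory.IntegrableOn
      (fun s : ℝ => |(-x / s^2)| • g (x * s⁻¹)) (Set.Ioo (0:ℝ) 1) := by
    refine MeasureTheory.IntegrableOn.congr_fun ?_ (fun s hs => (hkey s hs).symm) measurableSet_Ioo
    exact (betaconv_Ioo (-a-c) a hu ha).const_mul ((x:ℂ)^(a+c))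
  constructor
  · exact (cov_aux_int x hx g).mpr hInt1
  · rw [cov_aux x hx g, setIntegral_congr_fun measurableSet_Ioo hkey,
      integral_const_mul, hbeta_aux (-a-c) a hu ha]
    rw [show -a - c + a = -c by ring]
    ring



lemma poch_succ (a : ℂ) (k : ℕ) : poch a (k+1) = poch a k * (a + k) :=
  Finset.prod_range_succ _ _

lemma Gamma_poch (z : ℂ) (hz : 0 < z.re) (k : ℕ) :
    Complex.Gamma (z + k) = poch z k * Complex.Gamma z := by
  induction k with
  | zero => simp [poch]
  | succ k ih =>
    have hne : z + k ≠ 0 := by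
      intro h
      have : (z + k).re = 0 := by rw [h]; simp
      simp [Complex.add_re] at this
      have : (0:ℝ) ≤ (k:ℝ) := Nat.cast_nonneg k
      linarith
    have : (z + (k+1 : ℕ) : ℂ) = (z + k) + 1 := by push_cast; ring
    rw [this, Complex.Gamma_add_one _ hne, ih, poch_succ]
    ring

lemma poch_ne_zero (z : ℂ) (hz : 0 < z.re) (k : ℕ) : poch z k ≠ 0 := by
  rw [poch]
  refine Finset.prod_ne_zero_iff.mpr fun i _ => ?_
  intro h
  have : (z + i).re = 0 := by rw [h]; simp
  simp [Complex.add_re] at this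
  have : (0:ℝ) ≤ (i:ℝ) := Nat.cast_nonneg i
  linarith

lemma poch_nat_factorial (m k : ℕ) :
    (m.factorial : ℂ) * poch ((m+1 : ℕ) : ℂ) k = ((m+k).factorial : ℂ) := by
  induction k with
  | zero => simp [poch]
  | succ k ih =>
    rw [poch_succ, ← mul_assoc, ih, show m + (k+1) = (m+k) + 1 by ring, Nat.factorial_succ]
    push_cast
    ring

lemma poch_split (z : ℂ) (k n : ℕ) (hk : k ≤ n) :
    poch z n = poch z k * ∏ i ∈ Finset.range (n-k), (z + k + i) := by
  have h := Finset.prod_range_add (fun i : ℕ => z + i) k (n-k)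
  rw [Nat.add_sub_cancel' hk] at h
  rw [poch, poch, h]
  congr 1
  refine Finset.prod_congr rfl fun i _ => ?_
  push_cast
  ring

lemma desc_prod (n k : ℕ) (hk : k ≤ n) :
    (∏ i ∈ Finset.range k, ((n:ℂ) - i)) * ((n-k).factorial : ℂ) = (n.factorial : ℂ) := by
  have h1 : ∏ i ∈ Finset.range k, ((n:ℂ) - i) = ∏ i ∈ Finset.range k, (((n-k:ℕ):ℂ) + 1 + i) := by
    rw [← Finset.prod_range_reflect (fun i => ((n:ℂ) - i)) k]
    refine Finset.prod_congr rfl fun i hi => ?_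
    have hi' : i < k := Finset.mem_range.mp hi
    have : (↑(k - 1 - i) : ℂ) = (k:ℂ) - 1 - i := by
      have h1 : i ≤ k - 1 := Nat.le_sub_one_of_lt hi'
      push_cast [Nat.cast_sub h1, Nat.cast_sub (Nat.one_le_of_lt hi')]
      ring
    rw [this, Nat.cast_sub hk]
    ring
  have h2 := poch_nat_factorial (n-k) k
  rw [Nat.sub_add_cancel hk] at h2
  rw [h1, ← h2]
  rw [poch]
  push_cast
  ring

lemma poch_neg_nat (n k : ℕ) (hk : k ≤ n) :
    poch (-(n:ℂ)) k * ((n-k).factorial : ℂ) = (-1)^k * (n.factorial : ℂ) := by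
  have h : poch (-(n:ℂ)) k = (-1)^k * ∏ i ∈ Finset.range k, ((n:ℂ) - i) := by
    rw [poch]
    rw [show (∏ i ∈ Finset.range k, (-(n:ℂ) + i)) =
        ∏ i ∈ Finset.range k, ((-1) * ((n:ℂ) - i)) from
      Finset.prod_congr rfl fun i _ => by ring]
    rw [Finset.prod_mul_distrib, Finset.prod_const, Finset.card_range]
  rw [h, mul_assoc, desc_prod n k hk]

lemma poch_neg_nat_zero (n k : ℕ) (hk : n < k) : poch (-(n:ℂ)) k = 0 := by
  rw [poch]
  refine Finset.prod_eq_zero (Finset.mem_range.mpr hk) ?_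
  simp

lemma gbinomA (pc : ℂ) (n k : ℕ) :
    gbinom (pc - n - 1) k * (k.factorial : ℂ) = (-1)^k * poch (1 + n - pc) k := by
  rw [gbinom, div_mul_cancel₀ _ (by exact_mod_cast Nat.factorial_ne_zero k)]
  rw [poch]
  rw [show (∏ i ∈ Finset.range k, (pc - n - 1 - i)) =
      ∏ i ∈ Finset.range k, ((-1) * (1 + (n:ℂ) - pc + i)) from
    Finset.prod_congr rfl fun i _ => by ring]
  rw [Finset.prod_mul_distrib, Finset.prod_const, Finset.card_range]

lemma gbinomB (q : ℂ) (n k : ℕ) (hk : k ≤ n) :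
    gbinom (q + n) (n-k) * (((n-k).factorial : ℂ)) * poch (1+q) k = poch (1+q) n := by
  rw [gbinom, div_mul_cancel₀ _ (by exact_mod_cast Nat.factorial_ne_zero (n-k))]
  rw [poch_split (1+q) k n hk]
  have h : ∏ i ∈ Finset.range (n-k), (q + (n:ℂ) - i)
      = ∏ i ∈ Finset.range (n-k), (1 + q + (k:ℂ) + i) := by
    rw [← Finset.prod_range_reflect (fun i : ℕ => q + (n:ℂ) - i) (n-k)]
    refine Finset.prod_congr rfl fun i hi => ?_
    have hi' : i < n - k := Finset.mem_range.mp hi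
    have h1 : (↑(n - k - 1 - i) : ℂ) = (n:ℂ) - k - 1 - i := by
      have e1 : i ≤ n - k - 1 := Nat.le_sub_one_of_lt hi'
      push_cast [Nat.cast_sub e1, Nat.cast_sub (Nat.one_le_of_lt hi'), Nat.cast_sub hk]
      ring
    rw [h1]
    ring
  rw [h]
  ring

end RLAux

set_option maxHeartbeats 2000000 in
/-- Corollary 5: Riemann–Liouville right-sided fractional integral of the Jacobi type
polynomial. -/
theorem rlRight_jacobiM (n : ℕ) (p q : ℝ) (hq : -1 < q) (δ τ : ℂ)
    (hδ : 0 < δ.re) (hδτ : δ.re < 1 - τ.re) (x : ℝ) (hx : 0 < x) :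
    rlRight δ (fun t => (t : ℂ) ^ (τ - 1) * jacobiM n p q (1 / t)) x =
      (-1) ^ n * Complex.Gamma (1 + (q : ℂ) + n) * Complex.Gamma (1 - δ - τ) /
        (Complex.Gamma (1 + (q : ℂ)) * Complex.Gamma (1 - τ)) *
        (x : ℂ) ^ (τ + δ - 1) *
        genHyp [1 + (n : ℂ) - p, -(n : ℂ), 1 - δ - τ]
          [1 + (q : ℂ), 1 - τ] (-(1 / (x : ℂ))) := by

  classical
  have hx0 : (x:ℂ) ≠ 0 := Complex.ofReal_ne_zero.mpr hx.ne'
  have hGd : Complex.Gamma δ ≠ 0 := Complex.Gamma_ne_zero_of_re_pos hδ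
  have re1q : 0 < (1 + (q:ℂ)).re := by
    simp only [Complex.add_re, Complex.one_re, Complex.ofReal_re]; linarith
  have re1t : 0 < (1 - τ).re := by
    simp only [Complex.sub_re, Complex.one_re]; linarith
  have re1dt : 0 < (1 - δ - τ).re := by
    simp only [Complex.sub_re, Complex.one_re]; linarith
  have hint : ∀ k : ℕ, MeasureTheory.IntegrableOn
      (fun t : ℝ => ((t - x : ℝ):ℂ)^(δ-1) * (t:ℂ)^(τ-1-(k:ℂ))) (Set.Ioi x) ∧
      ∫ t in Set.Ioi x, ((t - x : ℝ):ℂ)^(δ-1) * (t:ℂ)^(τ-1-(k:ℂ))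
        = (x:ℂ)^(δ+(τ-1-(k:ℂ))) *
          (Complex.Gamma δ * Complex.Gamma (-δ-(τ-1-(k:ℂ))) / Complex.Gamma (-(τ-1-(k:ℂ)))) := by
    intro k
    refine RLAux.beta_Ioi x hx δ (τ-1-(k:ℂ)) hδ ?_
    have : (δ + (τ-1-(k:ℂ))).re = δ.re + τ.re - 1 - k := by
      simp [Complex.add_re, Complex.sub_re, Complex.natCast_re]; ring
    rw [this]
    have : (0:ℝ) ≤ (k:ℝ) := Nat.cast_nonneg k
    linarith
  have hptwise : ∀ t ∈ Set.Ioi x,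
      ((t - x : ℝ):ℂ)^(δ-1) * ((t:ℂ)^(τ-1) * jacobiM n p q (1/(t:ℂ)))
      = ∑ k ∈ Finset.range (n+1),
          ((-1:ℂ)^n * (Nat.factorial n : ℂ) * gbinom ((p:ℂ) - n - 1) k *
            gbinom ((q:ℂ) + n) (n-k) * (-1:ℂ)^k) *
          (((t - x : ℝ):ℂ)^(δ-1) * (t:ℂ)^(τ-1-(k:ℂ))) := by
    intro t ht
    have ht0 : (0:ℝ) < t := hx.trans ht
    have htc : (t:ℂ) ≠ 0 := Complex.ofReal_ne_zero.mpr ht0.ne'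
    simp only [jacobiM]
    rw [Finset.mul_sum, Finset.mul_sum, Finset.mul_sum]
    refine Finset.sum_congr rfl fun k _ => ?_
    have e1 : (t:ℂ)^(τ-1-(k:ℂ)) = (t:ℂ)^(τ-1) * (((t:ℂ))^k)⁻¹ := by
      rw [show τ-1-(k:ℂ) = (τ-1) - (k:ℂ) from rfl, Complex.cpow_sub _ _ htc,
        Complex.cpow_natCast, div_eq_mul_inv]
    have e2 : (-(1/(t:ℂ)))^k = (-1:ℂ)^k * (((t:ℂ))^k)⁻¹ := by
      rw [neg_pow, one_div, inv_pow]
    rw [e1, e2]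
    ring
  have hsum :
      ∫ t in Set.Ioi x, ((t - x : ℝ):ℂ)^(δ-1) * ((t:ℂ)^(τ-1) * jacobiM n p q (1/(t:ℂ)))
      = ∑ k ∈ Finset.range (n+1),
          ((-1:ℂ)^n * (Nat.factorial n : ℂ) * gbinom ((p:ℂ) - n - 1) k *
            gbinom ((q:ℂ) + n) (n-k) * (-1:ℂ)^k) *
          ((x:ℂ)^(δ+(τ-1-(k:ℂ))) *
            (Complex.Gamma δ * Complex.Gamma (-δ-(τ-1-(k:ℂ))) / Complex.Gamma (-(τ-1-(k:ℂ))))) := by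
    rw [MeasureTheory.setIntegral_congr_fun measurableSet_Ioi hptwise,
      MeasureTheory.integral_finset_sum _ (fun k _ => ((hint k).1.const_mul _))]
    refine Finset.sum_congr rfl fun k _ => ?_
    rw [MeasureTheory.integral_const_mul, (hint k).2]
  have hF0 : ∀ k ∉ Finset.range (n+1),
      (([1 + (n:ℂ) - p, -(n:ℂ), 1 - δ - τ].map (fun a => poch a k)).prod /
        (([1 + (q:ℂ), 1 - τ].map (fun c => poch c k)).prod))
        * (-(1 / (x:ℂ))) ^ k / (Nat.factorial k) = 0 := by
    intro k hk
    have hnk : n < k := by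
      by_contra h
      exact hk (Finset.mem_range.mpr (Nat.lt_succ_of_le (not_lt.mp h)))
    simp [RLAux.poch_neg_nat_zero n k hnk]
  have hRHS : genHyp [1 + (n:ℂ) - p, -(n:ℂ), 1 - δ - τ] [1 + (q:ℂ), 1 - τ] (-(1 / (x:ℂ)))
      = ∑ k ∈ Finset.range (n+1),
        (([1 + (n:ℂ) - p, -(n:ℂ), 1 - δ - τ].map (fun a => poch a k)).prod /
          (([1 + (q:ℂ), 1 - τ].map (fun c => poch c k)).prod))
          * (-(1 / (x:ℂ))) ^ k / (Nat.factorial k) := by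
    rw [genHyp]
    exact tsum_eq_sum hF0
  rw [rlRight, hsum, hRHS, Finset.mul_sum, Finset.mul_sum]
  refine Finset.sum_congr rfl fun k hk => ?_
  have hkn : k ≤ n := Nat.lt_succ_iff.mp (Finset.mem_range.mp hk)
  -- Gamma rewrites
  have eG1 : Complex.Gamma (-δ-(τ-1-(k:ℂ))) = poch (1-δ-τ) k * Complex.Gamma (1-δ-τ) := by
    rw [show -δ-(τ-1-(k:ℂ)) = (1-δ-τ) + (k:ℂ) by ring]
    exact RLAux.Gamma_poch _ re1dt k
  have eG2 : Complex.Gamma (-(τ-1-(k:ℂ))) = poch (1-τ) k * Complex.Gamma (1-τ) := by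
    rw [show -(τ-1-(k:ℂ)) = (1-τ) + (k:ℂ) by ring]
    exact RLAux.Gamma_poch _ re1t k
  have eG3 : Complex.Gamma (1 + (q:ℂ) + n) = poch (1+(q:ℂ)) n * Complex.Gamma (1+(q:ℂ)) :=
    RLAux.Gamma_poch _ re1q n
  -- x powers
  have ex : (x:ℂ)^(δ+(τ-1-(k:ℂ))) = (x:ℂ)^(τ+δ-1) * (((x:ℂ))^k)⁻¹ := by
    rw [show δ+(τ-1-(k:ℂ)) = (τ+δ-1) - (k:ℂ) by ring, Complex.cpow_sub _ _ hx0,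
      Complex.cpow_natCast, div_eq_mul_inv]
  have ex2 : (-(1/(x:ℂ)))^k = (-1:ℂ)^k * (((x:ℂ))^k)⁻¹ := by
    rw [neg_pow, one_div, inv_pow]
  -- coefficient identities
  have hfknz : ((Nat.factorial k : ℂ)) ≠ 0 := by exact_mod_cast Nat.factorial_ne_zero k
  have hfnknz : ((Nat.factorial (n-k) : ℂ)) ≠ 0 := by exact_mod_cast Nat.factorial_ne_zero (n-k)
  have hA : gbinom ((p:ℂ) - n - 1) k = (-1:ℂ)^k * poch (1 + (n:ℂ) - p) k / (Nat.factorial k) := by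
    rw [eq_div_iff hfknz]
    exact RLAux.gbinomA (p:ℂ) n k
  have hpq : poch (1+(q:ℂ)) k ≠ 0 := RLAux.poch_ne_zero _ re1q k
  have hpt : poch (1-τ) k ≠ 0 := RLAux.poch_ne_zero _ re1t k
  have hGq : Complex.Gamma (1+(q:ℂ)) ≠ 0 := Complex.Gamma_ne_zero_of_re_pos re1q
  have hGt : Complex.Gamma (1-τ) ≠ 0 := Complex.Gamma_ne_zero_of_re_pos re1t
  have hB : gbinom ((q:ℂ) + n) (n-k)
      = poch (1+(q:ℂ)) n / ((Nat.factorial (n-k) : ℂ) * poch (1+(q:ℂ)) k) := by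
    rw [eq_div_iff (mul_ne_zero hfnknz hpq), ← mul_assoc]
    exact RLAux.gbinomB (q:ℂ) n k hkn
  have hC : poch (-(n:ℂ)) k = (-1:ℂ)^k * (Nat.factorial n : ℂ) / (Nat.factorial (n-k) : ℂ) := by
    rw [eq_div_iff hfnknz]
    exact RLAux.poch_neg_nat n k hkn
  have hxk : ((x:ℂ))^k ≠ 0 := pow_ne_zero k hx0
  simp only [List.map_cons, List.map_nil, List.prod_cons, List.prod_nil]
  rw [eG1, eG2, eG3, ex, ex2, hA, hB, hC]
  field_simp [hGd, hGq, hGt, hpq, hpt, hfknz, hfnknz, hxk]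
end
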